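/- Let α : ℝ³ × ℝ³ → ℂ be measurable and such that for almost every y ∈ ℝ³ the function x ↦ α(x, y) is an H¹ function. Then ∬ |V(x − y)| |α(x, y)|² dx dy ≤ C (∬ |α(x, y)|² dx dy)^{1/2} (∬ |α(x, y)|² dx dy + ∬ ‖∇ₓα(x, y)‖² dx dy)^{1/2}. (This is the estimate |tr α* Π_V(α)| ≤ C ‖α‖_{S₂} ‖Mα‖_{S₂} used to bound the pairing term of the energy.) -/

import Mathlib

open MeasureTheory
open scoped ENNReal

/-- A function `f : ℝ³ → ℂ` is an `H¹` function: it is differentiable, square-integrable,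
and its (Fréchet) derivative is square-integrable (in operator norm). -/
def IsH1 (f : EuclideanSpace ℝ (Fin 3) → ℂ) : Prop :=
  Differentiable ℝ f ∧
    (∫⁻ x, (‖f x‖₊ : ℝ≥0∞) ^ 2) < ⊤ ∧
    (∫⁻ x, (‖fderiv ℝ f x‖₊ : ℝ≥0∞) ^ 2) < ⊤

private lemma rpow_two' (z : ℝ≥0∞) : z ^ (2 : ℝ) = z ^ 2 := by
  rw [show (2 : ℝ) = ((2 : ℕ) : ℝ) by norm_num, ENNReal.rpow_natCast]

private lemma sqrt_sq' (z : ℝ≥0∞) : (z ^ (1 / 2 : ℝ)) ^ (2 : ℝ) = z := by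
  rw [← ENNReal.rpow_mul]; norm_num

/-- Assume the form bound `V² ≤ C²(1 − Δ)`.  Let `α : ℝ³ × ℝ³ → ℂ` be
measurable and such that for a.e. `y` the function `x ↦ α(x, y)` is `H¹`.  Then
`∬ |V(x − y)| |α(x, y)|² dx dy ≤ C (∬ |α|²)^{1/2} (∬ |α|² + ∬ ‖∇ₓα‖²)^{1/2}`, i.e. the
estimate `|tr α* Π_V(α)| ≤ C ‖α‖_{S₂} ‖Mα‖_{S₂}`. -/
theorem stmt16 (V : EuclideanSpace ℝ (Fin 3) → ℝ) (hV : Measurable V)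
    (C : ℝ) (hC : 0 ≤ C)
    (hbound : ∀ f : EuclideanSpace ℝ (Fin 3) → ℂ, IsH1 f →
      (∫⁻ x, (‖V x • f x‖₊ : ℝ≥0∞) ^ 2) ≤
        (ENNReal.ofReal C) ^ 2 *
          ((∫⁻ x, (‖f x‖₊ : ℝ≥0∞) ^ 2) + ∫⁻ x, (‖fderiv ℝ f x‖₊ : ℝ≥0∞) ^ 2))
    (α : EuclideanSpace ℝ (Fin 3) × EuclideanSpace ℝ (Fin 3) → ℂ) (hα : Measurable α)
    (hαH1 : ∀ᵐ y : EuclideanSpace ℝ (Fin 3), IsH1 fun x => α (x, y)) :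
    (∫⁻ y, ∫⁻ x, (‖V (x - y)‖₊ : ℝ≥0∞) * (‖α (x, y)‖₊ : ℝ≥0∞) ^ 2) ≤
      ENNReal.ofReal C * (∫⁻ y, ∫⁻ x, (‖α (x, y)‖₊ : ℝ≥0∞) ^ 2) ^ (1 / 2 : ℝ) *
        ((∫⁻ y, ∫⁻ x, (‖α (x, y)‖₊ : ℝ≥0∞) ^ 2) +
          ∫⁻ y, ∫⁻ x, (‖fderiv ℝ (fun x => α (x, y)) x‖₊ : ℝ≥0∞) ^ 2) ^ (1 / 2 : ℝ) := by
  have h22 : Real.HolderConjugate 2 2 := Real.HolderConjugate.two_two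
  -- abbreviations
  set A : EuclideanSpace ℝ (Fin 3) → ℝ≥0∞ :=
    fun y => ∫⁻ x, (‖α (x, y)‖₊ : ℝ≥0∞) ^ 2 with hA_def
  set B : EuclideanSpace ℝ (Fin 3) → ℝ≥0∞ :=
    fun y => ∫⁻ x, (‖fderiv ℝ (fun x => α (x, y)) x‖₊ : ℝ≥0∞) ^ 2 with hB_def
  set H : EuclideanSpace ℝ (Fin 3) → ℝ≥0∞ :=
    fun y => ∫⁻ x, (‖V (x - y)‖₊ : ℝ≥0∞) ^ 2 * (‖α (x, y)‖₊ : ℝ≥0∞) ^ 2 with hH_def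
  have hαm : ∀ y, Measurable fun x => α (x, y) :=
    fun y => hα.comp (measurable_prodMk_right)
  have hVm : ∀ y, Measurable fun x : EuclideanSpace ℝ (Fin 3) => V (x - y) :=
    fun y => hV.comp (measurable_id.sub measurable_const)
  -- measurability of A and H
  have hAm : Measurable A :=
    Measurable.lintegral_prod_left' (f := fun p => (‖α p‖₊ : ℝ≥0∞) ^ 2)
      (hα.nnnorm.coe_nnreal_ennreal.pow_const 2)
  have hHm : Measurable H :=
    Measurable.lintegral_prod_left'
      (f := fun p : EuclideanSpace ℝ (Fin 3) × EuclideanSpace ℝ (Fin 3) =>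
        (‖V (p.1 - p.2)‖₊ : ℝ≥0∞) ^ 2 * (‖α p‖₊ : ℝ≥0∞) ^ 2)
      (((hV.comp (measurable_fst.sub measurable_snd)).nnnorm.coe_nnreal_ennreal.pow_const 2).mul
        (hα.nnnorm.coe_nnreal_ennreal.pow_const 2))
  -- Step 1: Cauchy–Schwarz in x for each y
  have key1 : ∀ y, (∫⁻ x, (‖V (x - y)‖₊ : ℝ≥0∞) * (‖α (x, y)‖₊ : ℝ≥0∞) ^ 2) ≤
      (A y) ^ (1 / 2 : ℝ) * (H y) ^ (1 / 2 : ℝ) := by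
    intro y
    have h := ENNReal.lintegral_mul_le_Lp_mul_Lq volume h22
      (f := fun x => (‖α (x, y)‖₊ : ℝ≥0∞))
      (g := fun x => (‖V (x - y)‖₊ : ℝ≥0∞) * (‖α (x, y)‖₊ : ℝ≥0∞))
      ((hαm y).nnnorm.coe_nnreal_ennreal.aemeasurable) (((hVm y).nnnorm.coe_nnreal_ennreal.mul (hαm y).nnnorm.coe_nnreal_ennreal).aemeasurable)
    simp only [Pi.mul_apply, rpow_two', mul_pow] at h
    calc (∫⁻ x, (‖V (x - y)‖₊ : ℝ≥0∞) * (‖α (x, y)‖₊ : ℝ≥0∞) ^ 2)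
        = ∫⁻ x, (‖α (x, y)‖₊ : ℝ≥0∞) * ((‖V (x - y)‖₊ : ℝ≥0∞) * (‖α (x, y)‖₊ : ℝ≥0∞)) := by
          congr 1; funext x; ring
      _ ≤ (A y) ^ (1 / 2 : ℝ) * (H y) ^ (1 / 2 : ℝ) := h
  -- Step 2: Cauchy–Schwarz in y
  have key2 : (∫⁻ y, (A y) ^ (1 / 2 : ℝ) * (H y) ^ (1 / 2 : ℝ)) ≤
      (∫⁻ y, A y) ^ (1 / 2 : ℝ) * (∫⁻ y, H y) ^ (1 / 2 : ℝ) := by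
    have h := ENNReal.lintegral_mul_le_Lp_mul_Lq volume h22
      (f := fun y => (A y) ^ (1 / 2 : ℝ)) (g := fun y => (H y) ^ (1 / 2 : ℝ))
      ((hAm.pow_const _).aemeasurable) ((hHm.pow_const _).aemeasurable)
    simpa only [Pi.mul_apply, sqrt_sq'] using h
  -- Step 3: the form bound, translated
  have key3 : ∀ᵐ y : EuclideanSpace ℝ (Fin 3),
      H y ≤ (ENNReal.ofReal C) ^ 2 * (A y + B y) := by
    filter_upwards [hαH1] with y hy
    set f : EuclideanSpace ℝ (Fin 3) → ℂ := fun x => α (x + y, y) with hf_def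
    have hdg : Differentiable ℝ fun x => α (x, y) := hy.1
    have hdf : Differentiable ℝ f := hdg.comp (differentiable_id.add_const y)
    have hfd : ∀ x, fderiv ℝ f x = fderiv ℝ (fun x => α (x, y)) (x + y) := by
      intro x
      have h : HasFDerivAt f (fderiv ℝ (fun x => α (x, y)) (x + y)) x := by
        simpa [hf_def, Function.comp_def] using (hdg (x + y)).hasFDerivAt.comp x ((hasFDerivAt_id x).add_const y)
      exact h.fderiv
    have hInt1 : (∫⁻ x, (‖f x‖₊ : ℝ≥0∞) ^ 2) = A y :=
      lintegral_add_right_eq_self (μ := volume) (fun x => (‖α (x, y)‖₊ : ℝ≥0∞) ^ 2) y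
    have hInt2 : (∫⁻ x, (‖fderiv ℝ f x‖₊ : ℝ≥0∞) ^ 2) = B y := by
      simp_rw [hfd]
      exact lintegral_add_right_eq_self (μ := volume)
        (fun x => (‖fderiv ℝ (fun x => α (x, y)) x‖₊ : ℝ≥0∞) ^ 2) y
    have hH1f : IsH1 f := by
      refine ⟨hdf, ?_, ?_⟩
      · rw [hInt1]; exact hy.2.1
      · rw [hInt2]; exact hy.2.2
    have hb := hbound f hH1f
    rw [hInt1, hInt2] at hb
    have hEq : H y = ∫⁻ x, (‖V x • f x‖₊ : ℝ≥0∞) ^ 2 := by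
      have ht := lintegral_add_right_eq_self (μ := volume)
        (fun x => (‖V (x - y)‖₊ : ℝ≥0∞) ^ 2 * (‖α (x, y)‖₊ : ℝ≥0∞) ^ 2) y
      simp only [hH_def]
      rw [← ht]
      congr 1; funext x
      simp [hf_def, nnnorm_smul, ENNReal.coe_mul, mul_pow, add_sub_cancel_right]
    rw [hEq]; exact hb
  -- Step 4: integrate step 3
  have hC2top : (ENNReal.ofReal C) ^ 2 ≠ ⊤ := ENNReal.pow_ne_top ENNReal.ofReal_ne_top
  have hSH : (∫⁻ y, H y) ≤ (ENNReal.ofReal C) ^ 2 * ((∫⁻ y, A y) + ∫⁻ y, B y) := by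
    calc (∫⁻ y, H y) ≤ ∫⁻ y, (ENNReal.ofReal C) ^ 2 * (A y + B y) := lintegral_mono_ae key3
      _ = (ENNReal.ofReal C) ^ 2 * ∫⁻ y, (A y + B y) := lintegral_const_mul' _ _ hC2top
      _ = (ENNReal.ofReal C) ^ 2 * ((∫⁻ y, A y) + ∫⁻ y, B y) := by
          rw [lintegral_add_left' hAm.aemeasurable]
  -- Assemble
  calc (∫⁻ y, ∫⁻ x, (‖V (x - y)‖₊ : ℝ≥0∞) * (‖α (x, y)‖₊ : ℝ≥0∞) ^ 2)
      ≤ ∫⁻ y, (A y) ^ (1 / 2 : ℝ) * (H y) ^ (1 / 2 : ℝ) := lintegral_mono key1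
    _ ≤ (∫⁻ y, A y) ^ (1 / 2 : ℝ) * (∫⁻ y, H y) ^ (1 / 2 : ℝ) := key2
    _ ≤ (∫⁻ y, A y) ^ (1 / 2 : ℝ) *
        ((ENNReal.ofReal C) ^ 2 * ((∫⁻ y, A y) + ∫⁻ y, B y)) ^ (1 / 2 : ℝ) := by
        gcongr
    _ = ENNReal.ofReal C * (∫⁻ y, A y) ^ (1 / 2 : ℝ) *
        ((∫⁻ y, A y) + ∫⁻ y, B y) ^ (1 / 2 : ℝ) := by
        rw [ENNReal.mul_rpow_of_nonneg _ _ (by norm_num : (0:ℝ) ≤ 1 / 2)]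
        rw [show ((ENNReal.ofReal C) ^ 2) ^ (1 / 2 : ℝ) = ENNReal.ofReal C by
          rw [← rpow_two', ← ENNReal.rpow_mul]; norm_num]
        ring
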